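/- Define x : ℝ → ℝ as the (2π+4)-periodic extension of the function given on [0, 2π+4) by x(t) = 1 + sin(t) for 0 ≤ t ≤ π, x(t) = 1 − (t − π) for π ≤ t < π + 2, x(t) = −1 − sin(2 − t) for π + 2 ≤ t < 2π + 2, and x(t) = t − 3 − 2π for 2π + 2 ≤ t < 2π + 4. Then x is twice differentiable on ℝ and satisfies ẍ(t) = −x(t) − |x(t) − 1|/2 + |x(t) + 1|/2 for all t ∈ ℝ, with initial conditions x(0) = 1 and ẋ(0) = 1; moreover x(t + 2π + 4) = x(t) for all t. -/

import Mathlib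

open Real Set

/-- period -/
noncomputable def rsT : ℝ := 2 * π + 4

/-- reduction to fundamental domain `[0, T)` -/
noncomputable def rsF (t : ℝ) : ℝ := t - rsT * ⌊t / rsT⌋

/-- the velocity function -/
noncomputable def rsD (t : ℝ) : ℝ :=
  if rsF t ≤ π then Real.cos (rsF t)
  else if rsF t ≤ π + 2 then -1
  else if rsF t ≤ 2 * π + 2 then Real.cos (2 - rsF t)
  else 1

lemma rsT_pos : (0:ℝ) < rsT := by
  have := Real.pi_pos; unfold rsT; linarith

lemma rsF_mem (t : ℝ) : rsF t ∈ Ico (0:ℝ) rsT := by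
  have h1 : (⌊t / rsT⌋ : ℝ) ≤ t / rsT := Int.floor_le _
  have h2 : t / rsT < ⌊t / rsT⌋ + 1 := Int.lt_floor_add_one _
  have hT := rsT_pos
  constructor
  · unfold rsF
    have := mul_le_mul_of_nonneg_left h1 hT.le
    rw [mul_div_cancel₀ _ hT.ne'] at this
    linarith
  · unfold rsF
    have := mul_lt_mul_of_pos_left h2 hT
    rw [mul_div_cancel₀ _ hT.ne'] at this
    linarith

lemma rsF_eq_self {s : ℝ} (hs : s ∈ Ico (0:ℝ) rsT) : rsF s = s := by
  have hT := rsT_pos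
  have : ⌊s / rsT⌋ = 0 := by
    rw [Int.floor_eq_zero_iff]
    constructor
    · exact div_nonneg hs.1 hT.le
    · rw [div_lt_one hT]; exact hs.2
  unfold rsF; rw [this]; simp

lemma rsF_neg {s : ℝ} (hs : s ∈ Ico (-2:ℝ) 0) : rsF s = s + rsT := by
  have hT := rsT_pos
  have hpi := Real.pi_gt_three
  have : ⌊s / rsT⌋ = -1 := by
    rw [Int.floor_eq_iff]
    push_cast
    constructor
    · rw [le_div_iff₀ hT]
      have : (2:ℝ) ≤ rsT := by unfold rsT; linarith
      nlinarith [hs.1]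
    · have : s / rsT < 0 := div_neg_of_neg_of_pos hs.2 hT
      linarith
  unfold rsF; rw [this]; push_cast; ring

lemma rsD_periodic : Function.Periodic rsD rsT := by
  intro t
  have hT := rsT_pos
  have hfl : ⌊(t + rsT) / rsT⌋ = ⌊t / rsT⌋ + 1 := by
    rw [show (t + rsT) / rsT = t / rsT + 1 by field_simp]
    exact Int.floor_add_one _
  have hf : rsF (t + rsT) = rsF t := by
    unfold rsF; rw [hfl]; push_cast; ring
  unfold rsD; rw [hf]

lemma rsD_eq₁ {s : ℝ} (hs : s ∈ Icc (0:ℝ) π) : rsD s = Real.cos s := by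
  have hpi := Real.pi_gt_three
  have hf : rsF s = s := rsF_eq_self ⟨hs.1, by unfold rsT; linarith [hs.2]⟩
  unfold rsD; rw [hf, if_pos hs.2]

lemma rsD_eq₂ {s : ℝ} (hs : s ∈ Icc π (π + 2)) : rsD s = -1 := by
  have hpi := Real.pi_gt_three
  have hf : rsF s = s := rsF_eq_self ⟨by linarith [hs.1], by unfold rsT; linarith [hs.2]⟩
  unfold rsD; rw [hf]
  by_cases h : s ≤ π
  · have : s = π := le_antisymm h hs.1
    rw [if_pos h, this, Real.cos_pi]
  · rw [if_neg h, if_pos hs.2]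

lemma rsD_eq₃ {s : ℝ} (hs : s ∈ Icc (π + 2) (2 * π + 2)) : rsD s = Real.cos (2 - s) := by
  have hpi := Real.pi_gt_three
  have hf : rsF s = s := rsF_eq_self ⟨by linarith [hs.1], by unfold rsT; linarith [hs.2]⟩
  unfold rsD; rw [hf]
  rw [if_neg (by linarith [hs.1])]
  by_cases h : s ≤ π + 2
  · have hse : s = π + 2 := le_antisymm h hs.1
    rw [if_pos h, hse]
    rw [show (2:ℝ) - (π + 2) = -π by ring, Real.cos_neg, Real.cos_pi]
  · rw [if_neg h, if_pos hs.2]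

lemma rsD_eq₄ {s : ℝ} (hs : s ∈ Icc (2 * π + 2) (2 * π + 4)) : rsD s = 1 := by
  have hpi := Real.pi_gt_three
  rcases lt_or_eq_of_le hs.2 with h | h
  · have hf : rsF s = s := rsF_eq_self ⟨by linarith [hs.1], by unfold rsT; exact h⟩
    unfold rsD; rw [hf]
    rw [if_neg (by linarith [hs.1]), if_neg (by linarith [hs.1])]
    by_cases h2 : s ≤ 2 * π + 2
    · have hse : s = 2 * π + 2 := le_antisymm h2 hs.1
      rw [if_pos h2, hse, show (2:ℝ) - (2 * π + 2) = -(2 * π) by ring, Real.cos_neg]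
      simpa using Real.cos_int_mul_two_pi 1
    · rw [if_neg h2]
  · have : s = rsT := by rw [h]; rfl
    rw [this, show rsT = 0 + rsT by ring, rsD_periodic 0]
    have : rsF 0 = 0 := rsF_eq_self ⟨le_rfl, rsT_pos⟩
    unfold rsD; rw [this, if_pos Real.pi_pos.le, Real.cos_zero]

lemma rsD_eq₀ {s : ℝ} (hs : s ∈ Icc (-2:ℝ) 0) : rsD s = 1 := by
  have hpi := Real.pi_gt_three
  rcases lt_or_eq_of_le hs.2 with h | h
  · have hf : rsF s = s + (2 * π + 4) := rsF_neg ⟨hs.1, h⟩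
    unfold rsD; rw [hf]
    rw [if_neg (by linarith [hs.1]), if_neg (by linarith [hs.1])]
    by_cases h2 : s + (2 * π + 4) ≤ 2 * π + 2
    · have hse : s = -2 := by linarith [hs.1]
      rw [if_pos h2, hse, show (2:ℝ) - (-2 + (2 * π + 4)) = -(2 * π) by ring, Real.cos_neg]
      simpa using Real.cos_int_mul_two_pi 1
    · rw [if_neg h2]
  · rw [h]
    have : rsF 0 = 0 := rsF_eq_self ⟨le_rfl, rsT_pos⟩
    unfold rsD; rw [this, if_pos Real.pi_pos.le, Real.cos_zero]

/-- gluing lemma at junctions -/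
lemma rs_glue {f g h : ℝ → ℝ} {a b c d : ℝ} (hab : a < b) (hbc : b < c)
    (hfg : ∀ u ∈ Icc a b, f u = g u) (hfh : ∀ u ∈ Icc b c, f u = h u)
    (hg : HasDerivAt g d b) (hh : HasDerivAt h d b) : HasDerivAt f d b := by
  have H1 : HasDerivWithinAt f d (Iic b) b := by
    have : HasDerivWithinAt f d (Icc a b) b :=
      (hg.hasDerivWithinAt).congr hfg (hfg b ⟨hab.le, le_rfl⟩)
    exact this.mono_of_mem_nhdsWithin (Icc_mem_nhdsLE hab)
  have H2 : HasDerivWithinAt f d (Ici b) b := by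
    have : HasDerivWithinAt f d (Icc b c) b :=
      (hh.hasDerivWithinAt).congr hfh (hfh b ⟨le_rfl, hbc.le⟩)
    exact this.mono_of_mem_nhdsWithin (Icc_mem_nhdsGE hbc)
  have := H1.union H2
  rw [Iic_union_Ici] at this
  exact this.hasDerivAt (by simp)

/-- interior lemma -/
lemma rs_interior {f g : ℝ → ℝ} {a b t d : ℝ} (h1 : a < t) (h2 : t < b)
    (hfg : ∀ u ∈ Icc a b, f u = g u) (hg : HasDerivAt g d t) : HasDerivAt f d t := by
  have hm : Ioo a b ∈ nhds t := Ioo_mem_nhds h1 h2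
  exact hg.congr_of_eventuallyEq
    (Filter.eventuallyEq_of_mem hm fun u hu => hfg u (Ioo_subset_Icc_self hu))

/-- shift a derivative by an integer number of periods -/
lemma rs_shift {f : ℝ → ℝ} (hf : Function.Periodic f rsT) {s d : ℝ}
    (h : HasDerivAt f d s) (n : ℤ) : HasDerivAt f d (s + n * rsT) := by
  have key : (fun u => f (u - n * rsT)) = f := by
    funext u; exact hf.sub_int_mul_eq n
  have hc : HasDerivAt (fun u : ℝ => u - n * rsT) 1 (s + n * rsT) := by
    simpa using (hasDerivAt_id (s + (n:ℝ) * rsT)).sub_const ((n:ℝ) * rsT)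
  have h' : HasDerivAt f d ((s + n * rsT) - n * rsT) := by
    rw [add_sub_cancel_right]; exact h
  have H : HasDerivAt (fun u => f (u - n * rsT)) d (s + n * rsT) := by
    simpa [Function.comp_def] using h'.comp (s + n * rsT) hc
  exact key ▸ H

/-- the (2π+4)-periodic piecewise defined function `x` is twice
differentiable and solves the rolling stone equation
`ẍ = −x − |x−1|/2 + |x+1|/2` with `x(0) = 1`, `ẋ(0) = 1`. -/
theorem stmt_8 (x : ℝ → ℝ)
    (h₁ : ∀ t : ℝ, 0 ≤ t → t ≤ π → x t = 1 + Real.sin t)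
    (h₂ : ∀ t : ℝ, π ≤ t → t < π + 2 → x t = 1 - (t - π))
    (h₃ : ∀ t : ℝ, π + 2 ≤ t → t < 2 * π + 2 → x t = -1 - Real.sin (2 - t))
    (h₄ : ∀ t : ℝ, 2 * π + 2 ≤ t → t < 2 * π + 4 → x t = t - 3 - 2 * π)
    (hper : ∀ t : ℝ, x (t + (2 * π + 4)) = x t) :
    ∃ x' : ℝ → ℝ,
      (∀ t : ℝ, HasDerivAt x (x' t) t) ∧
      (∀ t : ℝ, HasDerivAt x' (-(x t) - |x t - 1| / 2 + |x t + 1| / 2) t) ∧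
      x 0 = 1 ∧ x' 0 = 1 ∧
      (∀ t : ℝ, x (t + (2 * π + 4)) = x t) := by
  have hpi := Real.pi_gt_three
  have hxper : Function.Periodic x rsT := fun t => hper t
  -- piece equalities for x on closed intervals
  have X1 : ∀ u ∈ Icc (0:ℝ) π, x u = 1 + Real.sin u := fun u hu => h₁ u hu.1 hu.2
  have X2 : ∀ u ∈ Icc π (π + 2), x u = 1 - (u - π) := by
    intro u hu
    rcases lt_or_eq_of_le hu.2 with h | h
    · exact h₂ u hu.1 h
    · rw [h, h₃ (π + 2) le_rfl (by linarith),
        show (2:ℝ) - (π + 2) = -π by ring, Real.sin_neg, Real.sin_pi]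
      ring
  have X3 : ∀ u ∈ Icc (π + 2) (2 * π + 2), x u = -1 - Real.sin (2 - u) := by
    intro u hu
    rcases lt_or_eq_of_le hu.2 with h | h
    · exact h₃ u hu.1 h
    · rw [h, h₄ (2 * π + 2) le_rfl (by linarith),
        show (2:ℝ) - (2 * π + 2) = -(2 * π) by ring, Real.sin_neg, Real.sin_two_pi]
      ring
  have X4 : ∀ u ∈ Icc (2 * π + 2) (2 * π + 4), x u = u - 3 - 2 * π := by
    intro u hu
    rcases lt_or_eq_of_le hu.2 with h | h
    · exact h₄ u hu.1 h
    · rw [h, show (2 * π + 4 : ℝ) = 0 + (2 * π + 4) by ring, hper 0,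
        h₁ 0 le_rfl Real.pi_pos.le, Real.sin_zero]
      ring
  have X0 : ∀ u ∈ Icc (-2:ℝ) 0, x u = u + 1 := by
    intro u hu
    rcases lt_or_eq_of_le hu.2 with h | h
    · rw [← hper u, h₄ (u + (2 * π + 4)) (by linarith [hu.1]) (by linarith)]
      ring
    · rw [h, h₁ 0 le_rfl Real.pi_pos.le, Real.sin_zero]; ring
  -- derivatives of the pieces
  have hd0 : ∀ u : ℝ, HasDerivAt (fun v : ℝ => v + 1) 1 u := fun u => by
    simpa using (hasDerivAt_id u).add_const 1
  have hd1 : ∀ u : ℝ, HasDerivAt (fun v => 1 + Real.sin v) (Real.cos u) u := fun u =>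
    (Real.hasDerivAt_sin u).const_add 1
  have hd2 : ∀ u : ℝ, HasDerivAt (fun v : ℝ => 1 - (v - π)) (-1) u := fun u => by
    simpa using ((hasDerivAt_id u).sub_const π).const_sub 1
  have hsin2 : ∀ u : ℝ, HasDerivAt (fun v => Real.sin (2 - v)) (-Real.cos (2 - u)) u := by
    intro u
    have := (Real.hasDerivAt_sin (2 - u)).comp u ((hasDerivAt_id u).const_sub 2)
    simpa [Function.comp_def] using this
  have hd3 : ∀ u : ℝ, HasDerivAt (fun v => -1 - Real.sin (2 - v)) (Real.cos (2 - u)) u := by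
    intro u
    simpa using (hsin2 u).const_sub (-1)
  have hd4 : ∀ u : ℝ, HasDerivAt (fun v : ℝ => v - 3 - 2 * π) 1 u := fun u => by
    simpa using ((hasDerivAt_id u).sub_const 3).sub_const (2 * π)
  have hD3 : ∀ u : ℝ, HasDerivAt (fun v => Real.cos (2 - v)) (Real.sin (2 - u)) u := by
    intro u
    have := (Real.hasDerivAt_cos (2 - u)).comp u ((hasDerivAt_id u).const_sub 2)
    simpa [Function.comp_def] using this
  -- first derivative on the fundamental domain
  have key1 : ∀ s ∈ Ico (0:ℝ) rsT, HasDerivAt x (rsD s) s := by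
    intro s hs
    have hm2 : s < 2 * π + 4 := hs.2
    rcases eq_or_lt_of_le hs.1 with h0 | h0
    · rw [← h0, rsD_eq₁ ⟨le_rfl, Real.pi_pos.le⟩, Real.cos_zero]
      exact rs_glue (by norm_num) Real.pi_pos X0 X1 (hd0 0) (by simpa using hd1 0)
    rcases lt_trichotomy s π with h | h | h
    · rw [rsD_eq₁ ⟨hs.1, h.le⟩]
      exact rs_interior h0 h X1 (hd1 s)
    · rw [h, rsD_eq₂ ⟨le_rfl, by linarith⟩]
      refine rs_glue Real.pi_pos (by linarith) X1 X2 ?_ (hd2 π)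
      have := hd1 π
      rwa [Real.cos_pi] at this
    rcases lt_trichotomy s (π + 2) with h' | h' | h'
    · rw [rsD_eq₂ ⟨h.le, h'.le⟩]
      exact rs_interior h h' X2 (hd2 s)
    · rw [h', rsD_eq₂ ⟨by linarith, le_rfl⟩]
      refine rs_glue (by linarith : π < π + 2) (by linarith) X2 X3 (hd2 _) ?_
      have := hd3 (π + 2)
      rwa [show (2:ℝ) - (π + 2) = -π by ring, Real.cos_neg, Real.cos_pi] at this
    rcases lt_trichotomy s (2 * π + 2) with h'' | h'' | h''
    · rw [rsD_eq₃ ⟨h'.le, h''.le⟩]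
      exact rs_interior h' h'' X3 (hd3 s)
    · rw [h'', rsD_eq₄ ⟨le_rfl, by linarith⟩]
      refine rs_glue (by linarith : π + 2 < 2 * π + 2) (by linarith) X3 X4 ?_ (hd4 _)
      have := hd3 (2 * π + 2)
      rwa [show (2:ℝ) - (2 * π + 2) = -(2 * π) by ring, Real.cos_neg, Real.cos_two_pi] at this
    · rw [rsD_eq₄ ⟨h''.le, hm2.le⟩]
      exact rs_interior h'' hm2 X4 (hd4 s)
  -- second derivative on the fundamental domain
  have key2 : ∀ s ∈ Ico (0:ℝ) rsT,
      HasDerivAt rsD (-(x s) - |x s - 1| / 2 + |x s + 1| / 2) s := by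
    intro s hs
    have hm2 : s < 2 * π + 4 := hs.2
    rcases eq_or_lt_of_le hs.1 with h0 | h0
    · rw [← h0]
      have hx : x 0 = 1 := by
        rw [h₁ 0 le_rfl Real.pi_pos.le, Real.sin_zero]; ring
      rw [hx, show -(1:ℝ) - |1 - 1| / 2 + |1 + 1| / 2 = 0 by norm_num]
      refine rs_glue (by norm_num) Real.pi_pos (fun u hu => rsD_eq₀ hu)
        (fun u hu => rsD_eq₁ hu) (hasDerivAt_const _ _) ?_
      have := Real.hasDerivAt_cos 0
      rwa [Real.sin_zero, neg_zero] at this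
    rcases lt_trichotomy s π with h | h | h
    · have hsin : 0 ≤ Real.sin s := Real.sin_nonneg_of_nonneg_of_le_pi h0.le h.le
      rw [X1 s ⟨h0.le, h.le⟩]
      rw [show (1:ℝ) + Real.sin s - 1 = Real.sin s by ring, abs_of_nonneg hsin,
        abs_of_nonneg (by linarith : (0:ℝ) ≤ 1 + Real.sin s + 1),
        show -(1 + Real.sin s) - Real.sin s / 2 + (1 + Real.sin s + 1) / 2 = -Real.sin s by ring]
      exact rs_interior h0 h (fun u hu => rsD_eq₁ hu) (Real.hasDerivAt_cos s)
    · rw [h]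
      have hx : x π = 1 := by
        rw [h₁ π Real.pi_pos.le le_rfl, Real.sin_pi]; ring
      rw [hx, show -(1:ℝ) - |1 - 1| / 2 + |1 + 1| / 2 = 0 by norm_num]
      refine rs_glue Real.pi_pos (by linarith) (fun u hu => rsD_eq₁ hu)
        (fun u hu => rsD_eq₂ hu) ?_ (hasDerivAt_const _ _)
      have := Real.hasDerivAt_cos π
      rwa [Real.sin_pi, neg_zero] at this
    rcases lt_trichotomy s (π + 2) with h' | h' | h'
    · rw [X2 s ⟨h.le, h'.le⟩]
      rw [abs_of_nonpos (by linarith : (1:ℝ) - (s - π) - 1 ≤ 0),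
        abs_of_nonneg (by linarith : (0:ℝ) ≤ 1 - (s - π) + 1),
        show -(1 - (s - π)) - -(1 - (s - π) - 1) / 2 + (1 - (s - π) + 1) / 2 = 0 by ring]
      exact rs_interior h h' (fun u hu => rsD_eq₂ hu) (hasDerivAt_const _ _)
    · rw [h']
      have hx : x (π + 2) = -1 := by
        rw [X2 (π + 2) ⟨by linarith, le_rfl⟩]; ring
      rw [hx, show -(-1:ℝ) - |-1 - 1| / 2 + |-1 + 1| / 2 = 0 by norm_num]
      refine rs_glue (by linarith : π < π + 2) (by linarith) (fun u hu => rsD_eq₂ hu)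
        (fun u hu => rsD_eq₃ hu) (hasDerivAt_const _ _) ?_
      have := hD3 (π + 2)
      rwa [show (2:ℝ) - (π + 2) = -π by ring, Real.sin_neg, Real.sin_pi, neg_zero] at this
    rcases lt_trichotomy s (2 * π + 2) with h'' | h'' | h''
    · have hsin : 0 ≤ Real.sin (2 - s) := by
        rw [← Real.sin_add_two_pi]
        exact Real.sin_nonneg_of_nonneg_of_le_pi (by linarith) (by linarith)
      rw [X3 s ⟨h'.le, h''.le⟩]
      rw [abs_of_nonpos (by linarith : (-1:ℝ) - Real.sin (2 - s) - 1 ≤ 0),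
        abs_of_nonpos (by linarith : (-1:ℝ) - Real.sin (2 - s) + 1 ≤ 0),
        show -(-1 - Real.sin (2 - s)) - -(-1 - Real.sin (2 - s) - 1) / 2
          + -(-1 - Real.sin (2 - s) + 1) / 2 = Real.sin (2 - s) by ring]
      exact rs_interior h' h'' (fun u hu => rsD_eq₃ hu) (hD3 s)
    · rw [h'']
      have hx : x (2 * π + 2) = -1 := by
        rw [X4 (2 * π + 2) ⟨le_rfl, by linarith⟩]; ring
      rw [hx, show -(-1:ℝ) - |-1 - 1| / 2 + |-1 + 1| / 2 = 0 by norm_num]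
      refine rs_glue (by linarith : π + 2 < 2 * π + 2) (by linarith)
        (fun u hu => rsD_eq₃ hu) (fun u hu => rsD_eq₄ hu) ?_ (hasDerivAt_const _ _)
      have := hD3 (2 * π + 2)
      rwa [show (2:ℝ) - (2 * π + 2) = -(2 * π) by ring, Real.sin_neg, Real.sin_two_pi,
        neg_zero] at this
    · rw [X4 s ⟨h''.le, hm2.le⟩]
      rw [abs_of_nonpos (by linarith : s - 3 - 2 * π - 1 ≤ 0),
        abs_of_nonneg (by linarith : (0:ℝ) ≤ s - 3 - 2 * π + 1),
        show -(s - 3 - 2 * π) - -(s - 3 - 2 * π - 1) / 2 + (s - 3 - 2 * π + 1) / 2 = 0 by ring]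
      exact rs_interior h'' hm2 (fun u hu => rsD_eq₄ hu) (hasDerivAt_const _ _)
  -- lift from the fundamental domain to all of ℝ
  have h3 : ∀ t : ℝ, rsF t + (⌊t / rsT⌋ : ℝ) * rsT = t := by
    intro t; unfold rsF; ring
  refine ⟨rsD, ?_, ?_, ?_, ?_, hper⟩
  · intro t
    have h2 := rs_shift hxper (key1 (rsF t) (rsF_mem t)) ⌊t / rsT⌋
    rw [h3 t] at h2
    have h4 : rsD t = rsD (rsF t) := by
      conv_lhs => rw [← h3 t]
      exact (rsD_periodic.int_mul _) _
    rw [h4]; exact h2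
  · intro t
    have hx4 : x t = x (rsF t) := by
      conv_lhs => rw [← h3 t]
      exact (hxper.int_mul _) _
    rw [hx4]
    have h2 := rs_shift rsD_periodic (key2 (rsF t) (rsF_mem t)) ⌊t / rsT⌋
    rw [h3 t] at h2
    exact h2
  · rw [h₁ 0 le_rfl Real.pi_pos.le, Real.sin_zero]; ring
  · rw [rsD_eq₁ ⟨le_rfl, Real.pi_pos.le⟩, Real.cos_zero]
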